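/- Let (μ, W) be a matrix weight with μ ≠ 0. For T ∈ M_N(ℂ), the following are equivalent: (i) T ∈ 𝒜 and T* ∈ 𝒜 (i.e. T W(x) = W(x) T* and T* W(x) = W(x) T for μ-almost every x); (ii) T is Hermitian (T = T*) and T W(x) = W(x) T for μ-almost every x. That is, 𝒜 ∩ 𝒜* = A_h. -/

import Mathlib

open Matrix MeasureTheory ComplexOrder

/-- Key matrix lemma: if `W` is positive definite, `H` is Hermitian and `H * W = -(W * H)`,
then `H = 0`. -/
lemma herm_anticomm_posdef_eq_zero {N : ℕ} {W H : Matrix (Fin N) (Fin N) ℂ}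
    (hW : W.PosDef) (hH : H.IsHermitian) (hanti : H * W = -(W * H)) : H = 0 := by
  have heig : ∀ i, hH.eigenvalues i = 0 := by
    intro i
    set v : Fin N → ℂ := ⇑(hH.eigenvectorBasis i) with hv
    have hv0 : v ≠ 0 := by
      rw [hv, Ne, WithLp.ofLp_eq_zero]; exact hH.eigenvectorBasis.orthonormal.ne_zero i
    have hmv : H *ᵥ v = (hH.eigenvalues i : ℂ) • v := hH.mulVec_eigenvectorBasis i
    set Q : ℂ := star v ⬝ᵥ (W *ᵥ v) with hQ
    have hQpos : 0 < Q := hW.dotProduct_mulVec_pos hv0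
    have hQne : Q ≠ 0 := ne_of_gt hQpos
    have hvstar : star v ᵥ* H = (hH.eigenvalues i : ℂ) • star v := by
      have := (star_mulVec (M := Hᴴ) (v := v)).symm
      rw [conjTranspose_conjTranspose, hH.eq, hmv] at this
      rw [this, star_smul]
      simp [Complex.star_def, Complex.conj_ofReal]
    -- compute star v ⬝ᵥ ((H*W) *ᵥ v) two ways
    have h1 : star v ⬝ᵥ ((H * W) *ᵥ v) = (hH.eigenvalues i : ℂ) * Q := by
      rw [← mulVec_mulVec, dotProduct_mulVec, hvstar, smul_dotProduct, smul_eq_mul, ← hQ]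
    have h2 : star v ⬝ᵥ ((H * W) *ᵥ v) = -((hH.eigenvalues i : ℂ) * Q) := by
      rw [hanti]
      simp only [neg_mulVec, dotProduct_neg, ← mulVec_mulVec, hmv, mulVec_smul,
        dotProduct_smul, smul_eq_mul, hQ]
    have hzero : (2 : ℂ) * ((hH.eigenvalues i : ℂ) * Q) = 0 := by
      rw [two_mul]; nth_rewrite 1 [← h1]; rw [h2]; ring
    have : (hH.eigenvalues i : ℂ) = 0 := by
      rcases mul_eq_zero.mp hzero with h | h
      · exact absurd h two_ne_zero
      · rcases mul_eq_zero.mp h with h | h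
        · exact h
        · exact absurd h hQne
    exact_mod_cast this
  have hspec := hH.spectral_theorem
  rw [show Matrix.diagonal (RCLike.ofReal ∘ hH.eigenvalues) = (0 : Matrix (Fin N) (Fin N) ℂ) by
    ext i j; simp [Matrix.diagonal_apply, heig]] at hspec
  simpa using hspec

/-- If `W` is positive definite and `T * W = W * Tᴴ`, `Tᴴ * W = W * T`, then `T` is Hermitian. -/
lemma herm_of_intertwine {N : ℕ} {W T : Matrix (Fin N) (Fin N) ℂ}
    (hW : W.PosDef) (h1 : T * W = W * Tᴴ) (h2 : Tᴴ * W = W * T) : T = Tᴴ := by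
  set H : Matrix (Fin N) (Fin N) ℂ := Complex.I • (T - Tᴴ) with hHdef
  have hHherm : H.IsHermitian := by
    unfold Matrix.IsHermitian
    rw [hHdef, Matrix.conjTranspose_smul, Matrix.conjTranspose_sub, conjTranspose_conjTranspose]
    simp only [Complex.star_def, Complex.conj_I]
    module
  have hanti : H * W = -(W * H) := by
    rw [hHdef, Matrix.smul_mul, Matrix.mul_smul, sub_mul, mul_sub, h1, h2]
    module
  have hH0 : H = 0 := herm_anticomm_posdef_eq_zero hW hHherm hanti
  have hsub : T - Tᴴ = 0 := by
    have h := congrArg (fun M => (-Complex.I) • M) hH0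
    simp only [hHdef, smul_smul, smul_zero, neg_mul, Complex.I_mul_I, neg_neg, one_smul] at h
    exact h
  exact sub_eq_zero.mp hsub

/-- For a matrix weight `(μ, W)` with `μ ≠ 0`: `T ∈ 𝒜 ∩ 𝒜*` if and only if `T` is
Hermitian and commutes with `W(x)` μ-a.e., i.e. `𝒜 ∩ 𝒜* = A_h`. -/
theorem A_cap_Astar_eq_Ah (N : ℕ) (hN : 1 ≤ N)
    (μ : Measure ℝ) [SigmaFinite μ] (hμ : μ ≠ 0)
    (W : ℝ → Matrix (Fin N) (Fin N) ℂ)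
    (hWmeas : ∀ i j, Measurable fun x => W x i j)
    (hWpos : ∀ᵐ x ∂μ, (W x).PosDef)
    (T : Matrix (Fin N) (Fin N) ℂ) :
    ((∀ᵐ x ∂μ, T * W x = W x * Tᴴ) ∧ (∀ᵐ x ∂μ, Tᴴ * W x = W x * T)) ↔
      (T = Tᴴ ∧ ∀ᵐ x ∂μ, T * W x = W x * T) := by
  haveI : (ae μ).NeBot := ae_neBot.mpr hμ
  constructor
  · rintro ⟨h1, h2⟩
    obtain ⟨x, hx1, hx2, hxW⟩ := (h1.and (h2.and hWpos)).exists
    have hT : T = Tᴴ := herm_of_intertwine hxW hx1 hx2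
    exact ⟨hT, h1.mono fun x hx => by rw [hx, ← hT]⟩
  · rintro ⟨hT, hcomm⟩
    exact ⟨hcomm.mono fun x hx => by rw [hx, ← hT],
      hcomm.mono fun x hx => by rw [← hT]; exact hx⟩
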